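/- The symbol ne correctly characterizes nonemptiness: for 1 ≤ k ≤ n, ne ∈ type(s^k) if and only if the k-stack s^k is nonempty; and ne ∉ type(s^0) for every 0-stack s^0. -/
import Mathlib


namespace HOPDA

/-- A `k`-stack with data: a 0-stack is a symbol from `Γ` together with an optional
data value from `D` (`none` = no-data); a `(k+1)`-stack is a list of `k`-stacks
(top of the stack is the last element of the list). -/
def Stk (Γ D : Type) : ℕ → Type
  | 0 => Γ × Option D
  | k+1 => List (Stk Γ D k)

variable {Γ D : Type}

def Stk.toList {k : ℕ} (s : Stk Γ D (k+1)) : List (Stk Γ D k) := s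
def Stk.ofList {k : ℕ} (l : List (Stk Γ D k)) : Stk Γ D (k+1) := l
def Stk.toAtom (s : Stk Γ D 0) : Γ × Option D := s
def Stk.ofAtom (x : Γ × Option D) : Stk Γ D 0 := x

/-- Stack operations: `pop k` and `push k α`. -/
inductive Op (Γ : Type) where
  | pop : ℕ → Op Γ
  | push : ℕ → Γ → Op Γ

def Op.level {Γ : Type} : Op Γ → ℕ
  | .pop k => k
  | .push k _ => k

/-- `pop^k`: remove the topmost `(k-1)`-stack of the topmost `k`-stack;
it may only be executed when the topmost `k`-stack has size at least 2. -/
def popAt (k : ℕ) : (n : ℕ) → Stk Γ D n → Option (Stk Γ D n)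
  | 0, _ => none
  | n+1, s =>
    if k = n + 1 then
      if 2 ≤ s.toList.length then some (Stk.ofList s.toList.dropLast) else none
    else
      match s.toList.getLast? with
      | none => none
      | some t => (popAt k n t).map (fun t' => Stk.ofList (s.toList.dropLast.concat t'))

/-- Replace the topmost 0-stack by `x`. -/
def setTop0 (x : Γ × Option D) : (n : ℕ) → Stk Γ D n → Option (Stk Γ D n)
  | 0, _ => some (Stk.ofAtom x)
  | n+1, s =>
    match s.toList.getLast? with
    | none => none
    | some t => (setTop0 x n t).map (fun t' => Stk.ofList (s.toList.dropLast.concat t'))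

/-- `push^k_α` with data `d`: duplicate the topmost `(k-1)`-stack, and replace the
topmost 0-stack of the copy by `(α, d)`. -/
def pushAt (k : ℕ) (α : Γ) (d : Option D) : (n : ℕ) → Stk Γ D n → Option (Stk Γ D n)
  | 0, _ => none
  | n+1, s =>
    if k = n + 1 then
      match s.toList.getLast? with
      | none => none
      | some t => (setTop0 (α, d) n t).map (fun t' => Stk.ofList (s.toList.concat t'))
    else
      match s.toList.getLast? with
      | none => none
      | some t => (pushAt k α d n t).map (fun t' => Stk.ofList (s.toList.dropLast.concat t'))

/-- The topmost 0-stack of a stack. -/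
def top0 : (n : ℕ) → Stk Γ D n → Option (Γ × Option D)
  | 0, s => some s.toAtom
  | n+1, s => s.toList.getLast?.bind (top0 n)

/-- Apply an operation (with read data value `d`, `none` for ε) to an `n`-stack. -/
def applyOp (op : Op Γ) (d : Option D) (n : ℕ) (s : Stk Γ D n) : Option (Stk Γ D n) :=
  match op with
  | .pop k => popAt k n s
  | .push k α => pushAt k α d n s

/-- The address (sequence of indices, counted from the bottom of each stack,
outermost level first) of the topmost `j`-stack of an `n`-stack, if defined. -/
def topAddr : (n : ℕ) → Stk Γ D n → (j : ℕ) → Option (List ℕ)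
  | 0, _, j => if j = 0 then some [] else none
  | n+1, s, j =>
    if j = n + 1 then some [] else
    match s.toList.getLast? with
    | none => none
    | some t => (topAddr n t j).map (fun p => (s.toList.length - 1) :: p)

/-- The size (number of `(r-1)`-stacks) of the topmost `r`-stack. -/
def topLen : (n : ℕ) → Stk Γ D n → (r : ℕ) → Option ℕ
  | 0, _, _ => none
  | n+1, s, r =>
    if r = n + 1 then some s.toList.length
    else s.toList.getLast?.bind (fun t => topLen n t r)

/-- The topmost `j`-stack itself. -/
def topGet : (n : ℕ) → Stk Γ D n → (j : ℕ) → Option (Stk Γ D j)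
  | 0, s, j => if h : j = 0 then some (cast (congrArg (Stk Γ D) h.symm) s) else none
  | n+1, s, j =>
    if h : j = n + 1 then some (cast (congrArg (Stk Γ D) h.symm) s)
    else s.toList.getLast?.bind (fun t => topGet n t j)

/-- Validity of an address in a stack. -/
def validAddr : (n : ℕ) → Stk Γ D n → List ℕ → Prop
  | _, _, [] => True
  | 0, _, _ :: _ => False
  | n+1, s, i :: rest => ∃ h : i < s.toList.length, validAddr n (s.toList.get ⟨i, h⟩) rest

/-- The origin map of one step: given the stack `s` before the operation and the
address of a substack in the stack after the operation, return the address of the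
substack it is a (traced) copy of.  A `pop` does not move any surviving substack;
a `push^r` creates, at the top, a copy of the old topmost `(r-1)`-stack, and
substacks of the copy originate from the corresponding substacks of the source. -/
def originOp {n : ℕ} (op : Op Γ) (s : Stk Γ D n) (a : List ℕ) : List ℕ :=
  match op with
  | .pop _ => a
  | .push r _ =>
    match topAddr n s r, topLen n s r with
    | some p, some L =>
      if a.take (n - r) = p ∧ a[(n - r)]? = some L then a.set (n - r) (L - 1) else a
    | _, _ => a

/-- A run of length `len`: a sequence of stacks connected by operations.
`dat i` is the data value read at step `i` (`none` for no data / ε);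
a `pop` may read a data value only if it equals the one stored in the topmost 0-stack. -/
structure Run (Γ D : Type) (n : ℕ) where
  len : ℕ
  stk : ℕ → Stk Γ D n
  op : ℕ → Op Γ
  dat : ℕ → Option D
  ok : ∀ i < len, applyOp (op i) (dat i) n (stk i) = some (stk (i + 1)) ∧
        (∀ k, op i = Op.pop k → dat i = none ∨ ∃ γ, top0 n (stk i) = some (γ, dat i))

variable {n : ℕ}

/-- Trace an address one step backwards (from configuration `i+1` to configuration `i`). -/
def backStep (R : Run Γ D n) (i : ℕ) (a : List ℕ) : List ℕ :=
  originOp (R.op i) (R.stk i) a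

/-- `backB R i j a`: the address in configuration `i` from which the substack at
address `a` in configuration `j` is traced (for `i ≤ j`). -/
def backB (R : Run Γ D n) (i : ℕ) : ℕ → List ℕ → List ℕ
  | j, a => if h : i < j then backB R i (j - 1) (backStep R (j - 1) a) else a
  termination_by j => j
  decreasing_by omega

/-- `R` is `k`-upper: the topmost `k`-stack of the last configuration is a traced
(possibly modified) copy of the topmost `k`-stack of the first configuration. -/
def Upper (R : Run Γ D n) (k : ℕ) : Prop :=
  ∃ a b, topAddr n (R.stk 0) k = some a ∧ topAddr n (R.stk R.len) k = some b ∧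
    backB R 0 R.len b = a ∧ ∀ i ≤ R.len, validAddr n (R.stk i) (backB R i R.len b)

/-- `R` is a `k`-return: the topmost `(k-1)`-stack of the last configuration is a
traced copy of the second topmost `(k-1)`-stack of the first configuration
(in particular the topmost `k`-stack initially has size at least 2), and while
tracing this copy it is never the topmost `(k-1)`-stack of `R i` for `i < R.len`. -/
def IsReturn (R : Run Γ D n) (k : ℕ) : Prop :=
  ∃ p L b, topAddr n (R.stk 0) k = some p ∧ topLen n (R.stk 0) k = some L ∧ 2 ≤ L ∧
    topAddr n (R.stk R.len) (k - 1) = some b ∧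
    backB R 0 R.len b = p.concat (L - 2) ∧
    (∀ i ≤ R.len, validAddr n (R.stk i) (backB R i R.len b)) ∧
    (∀ i < R.len, topAddr n (R.stk i) (k - 1) ≠ some (backB R i R.len b))

/-- `Splits R S T`: the run `R` is the composition `S ∘ T` of the runs `S` and `T`. -/
def Splits (R S T : Run Γ D n) : Prop :=
  R.len = S.len + T.len ∧ S.stk S.len = T.stk 0 ∧
  (∀ i ≤ S.len, R.stk i = S.stk i) ∧
  (∀ i < S.len, R.op i = S.op i ∧ R.dat i = S.dat i) ∧
  (∀ i ≤ T.len, R.stk (S.len + i) = T.stk i) ∧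
  (∀ i < T.len, R.op (S.len + i) = T.op i ∧ R.dat (S.len + i) = T.dat i)

/-- The run `R` with its first step removed (`R[1..|R|]`). -/
def Run.tail (R : Run Γ D n) : Run Γ D n where
  len := R.len - 1
  stk i := R.stk (i + 1)
  op i := R.op (i + 1)
  dat i := R.dat (i + 1)
  ok i hi := R.ok (i + 1) (by omega)

/-- Run descriptors (elements of the sets `T^k`): either the symbol `ne`, or a
tuple `(Ψ, p, (m, r, Σ, q))` consisting of a family of (finite, list-encoded)
sets of run descriptors indexed by level, a state `p`, and a component
`(m, r, Σ, q) ∈ D^k` with `m` an element of the monoid `M`, a level `r`, a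
family `Σ` of sets of run descriptors indexed by level, and a state `q`. -/
inductive RD (Q M : Type) : Type where
  | ne : RD Q M
  | mk : (ℕ → List (RD Q M)) → Q → M → ℕ → (ℕ → List (RD Q M)) → Q → RD Q M

/-- `Composer k l Φ Ψ` formalizes Definition 3: `(Φ^k, Φ^{k-1}, …, Φ^l ; Ψ^k)` is
a composer (`Φ` is the level-indexed family of the sets `Φ^i`, which is empty
outside `l ≤ i ≤ k`). -/
inductive Composer {Q M : Type} : ℕ → ℕ → (ℕ → List (RD Q M)) → List (RD Q M) → Prop where
  /-- Rule 1: for `σ = (Σ^n,…,Σ^{l+1},p,σ̂) ∈ T^l` and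
  `τ = (Σ^n,…,Σ^{k+1},p,σ̂) ∈ T^k`, the tuple `(Σ^k,…,Σ^{l+1},{σ}; {τ})` is a
  composer. -/
  | single (k l : ℕ) (hlk : l < k) (Sf : ℕ → List (RD Q M)) (p : Q) (m : M)
      (r : ℕ) (Sg : ℕ → List (RD Q M)) (q : Q) :
      Composer k l
        (fun i => if i = l then [RD.mk Sf p m r Sg q]
                  else if l + 1 ≤ i ∧ i ≤ k then Sf i else [])
        [RD.mk (fun i => if k + 1 ≤ i then Sf i else []) p m r Sg q]
  /-- Rule 2: `(∅,…,∅; {ne})` is a composer. -/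
  | empt (k l : ℕ) (hlk : l < k) : Composer k l (fun _ => []) [RD.ne]
  /-- Rule 3: unions of composers. -/
  | union (k l : ℕ) (Ψ : List (RD Q M)) (Φf : RD Q M → ℕ → List (RD Q M)) :
      (∀ τ ∈ Ψ, Composer k l (Φf τ) [τ]) →
      Composer k l (fun i => Ψ.flatMap (fun τ => Φf τ i)) Ψ

/-- `TypeS type0 k s σ` means `σ ∈ type(s)` for the `k`-stack `s`, where
`type0` is the type assignment of 0-stacks (Definition 4) and types of higher
stacks are given by Definition 5: `σ ∈ type(t^k : t^{k-1})` iff there is a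
composer `(Φ^k, Φ^{k-1}; {σ})` with `Φ^k ⊆ type(t^k)` and
`Φ^{k-1} ⊆ type(t^{k-1})`. -/
inductive TypeS {Γ D Q M : Type} (type0 : Γ → Option D → RD Q M → Prop) :
    (k : ℕ) → Stk Γ D k → RD Q M → Prop where
  | base (γ : Γ) (d : Option D) (σ : RD Q M) :
      type0 γ d σ → TypeS type0 0 (Stk.ofAtom (γ, d)) σ
  | comp (k : ℕ) (lst : List (Stk Γ D k)) (t : Stk Γ D k)
      (Φ : ℕ → List (RD Q M)) (σ : RD Q M) :
      Composer (k + 1) k Φ [σ] →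
      (∀ i, ¬(i = k ∨ i = k + 1) → Φ i = []) →
      (∀ τ ∈ Φ (k + 1), TypeS type0 (k + 1) (Stk.ofList lst) τ) →
      (∀ τ ∈ Φ k, TypeS type0 k t τ) →
      TypeS type0 (k + 1) (Stk.ofList (lst.concat t)) σ

/-- The composed stack `s^{l+j} : s^{l+j-1} : … : s^l` (with the convention
`s^{i+1} : s^i` = append `s^i` on top of `s^{i+1}`, associated to the right). -/
def comb (s : (i : ℕ) → Stk Γ D i) (l : ℕ) : (j : ℕ) → Stk Γ D (l + j)
  | 0 => s l
  | j+1 => Stk.ofList ((s (l + j + 1)).toList.concat (comb s l j))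

/-- the symbol `ne` correctly characterizes nonemptiness:
for `k ≥ 1`, `ne ∈ type(s^k)` iff the `k`-stack `s^k` is nonempty, and
`ne ∉ type(s^0)` for every 0-stack (given that, as in Definition 4, no rule for
0-stacks introduces `ne`). -/
theorem ne_characterizes_nonempty {Γ D Q M : Type}
    (type0 : Γ → Option D → RD Q M → Prop)
    (h0 : ∀ γ d, ¬ type0 γ d RD.ne) :
    (∀ (k : ℕ) (lst : List (Stk Γ D k)),
      TypeS type0 (k + 1) (Stk.ofList lst) RD.ne ↔ lst ≠ []) ∧
    (∀ s0 : Stk Γ D 0, ¬ TypeS type0 0 s0 RD.ne) := by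
  constructor
  · intro k lst
    constructor
    · intro h
      cases h with
      | comp k lst' t Φ σ hc hΦ h1 h2 =>
        simp [Stk.ofList]
    · intro hne
      obtain ⟨l, t, rfl⟩ : ∃ l t, lst = l.concat t :=
        ⟨lst.dropLast, lst.getLast hne, by
          simp [List.concat_eq_append, List.dropLast_append_getLast hne]⟩
      exact TypeS.comp k l t (fun _ => []) RD.ne
        (Composer.empt (k+1) k (by omega)) (fun _ _ => rfl)
        (by simp) (by simp)
  · intro s0 h
    cases h with
    | base γ d σ hγ => exact h0 γ d hγ

end HOPDA
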